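/- (Theorem 1, case i=2, finite-group version.) For all (x,u,y,v,z) ∈ A⁵ one has (1/|A|) · ∑_{x′,v′,z′ ∈ A} T(x,x′) · conj(S(v,v′)) · S(z,z′) · D(x′,y,u,v′,z′) = conj(D(x,u,y,v,z)), where conj denotes complex conjugation and |A| is the cardinality of A. -/

import Mathlib

open Finset

/-- Theorem 1, case `i = 2`, finite-group version: P-symmetry relation
`(T ⊗ σ ⊗ S⁻¹ ⊗ S) D = conj D` written out in coordinates. -/
theorem pachner_P_symmetry_case_two
    {A : Type*} [AddCommGroup A] [Fintype A] [DecidableEq A]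
    (g : A → ℂ) (hg_abs : ∀ x, ‖g x‖ = 1) (hg_sym : ∀ x, g (-x) = g x)
    (χ : A → A → ℂ) (hχ : ∀ x y, χ x y = g x * g y * (g (x + y))⁻¹)
    (hχ_add : ∀ x x' y, χ (x + x') y = χ x y * χ x' y)
    (hχ_nondeg : ∀ x : A, x ≠ 0 → ∃ y : A, χ x y ≠ 1)
    (δ : A → ℂ) (hδ : ∀ a, δ a = if a = 0 then 1 else 0)
    (D : A → A → A → A → A → ℂ)
    (hD : ∀ x u y v z, D x u y v z = χ x z * δ (x - u + y) * δ (y - v + z))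
    (T : A → A → ℂ) (hT : ∀ x y, T x y = δ (x + y) * g x)
    (S : A → A → ℂ) (hS : ∀ x y, S x y = g (x - y)) :
    ∀ x u y v z : A,
      (Fintype.card A : ℂ)⁻¹ *
          ∑ x' : A, ∑ v' : A, ∑ z' : A,
            T x x' * (starRingEnd ℂ) (S v v') * S z z' * D x' y u v' z'
        = (starRingEnd ℂ) (D x u y v z) := by
  -- basic facts
  have gne : ∀ a, g a ≠ 0 := by
    intro a h
    have := hg_abs a
    rw [h] at this; simp at this
  have hχ00 : χ 0 0 = g 0 := by
    rw [hχ]; simp [gne 0]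
  have hsq : χ 0 0 = χ 0 0 * χ 0 0 := by
    have := hχ_add 0 0 0
    simpa using this
  have g0 : g 0 = 1 := by
    have h1 : g 0 = g 0 * g 0 := by rw [← hχ00]; exact hsq
    have := gne 0
    field_simp at h1
    tauto
  have χne : ∀ a b, χ a b ≠ 0 := by
    intro a b
    rw [hχ]
    exact mul_ne_zero (mul_ne_zero (gne a) (gne b)) (inv_ne_zero (gne _))
  have χsymm : ∀ a b, χ a b = χ b a := by
    intro a b; rw [hχ, hχ, add_comm a b]; ring
  have χ0 : ∀ b, χ 0 b = 1 := by
    intro b; rw [hχ, g0, zero_add, one_mul]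
    exact mul_inv_cancel₀ (gne b)
  have χ_neg : ∀ a b, χ (-a) b = (χ a b)⁻¹ := by
    intro a b
    have h : χ a b * χ (-a) b = 1 := by
      rw [← hχ_add, add_neg_cancel, χ0]
    exact eq_inv_of_mul_eq_one_right (by linear_combination h)
  have χ_neg2 : ∀ a b, χ a (-b) = (χ a b)⁻¹ := by
    intro a b; rw [χsymm, χ_neg, χsymm]
  have conjg : ∀ a, (starRingEnd ℂ) (g a) = (g a)⁻¹ := by
    intro a
    have h : g a * (starRingEnd ℂ) (g a) = 1 := by
      rw [Complex.mul_conj]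
      norm_cast
      rw [Complex.normSq_eq_norm_sq, hg_abs]; norm_num
    exact eq_inv_of_mul_eq_one_right (by linear_combination h)
  have gadd : ∀ a b, g (a + b) = g a * g b * (χ a b)⁻¹ := by
    intro a b
    have h := hχ a b
    field_simp [gne, χne] at h ⊢
    linear_combination h
  have gsub : ∀ a b, g (a - b) = g a * g b * χ a b := by
    intro a b
    have h := gadd a (-b)
    rw [hg_sym, χ_neg2, inv_inv] at h
    rw [← h, sub_eq_add_neg]
  -- orthogonality
  have orth : ∀ w : A, ∑ z' : A, χ w z' = (Fintype.card A : ℂ) * δ w := by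
    intro w
    by_cases hw : w = 0
    · subst hw
      simp [χ0, hδ, Finset.card_univ]
    · obtain ⟨y0, hy0⟩ := hχ_nondeg w hw
      have hrw : ∀ z' : A, χ w y0 * χ w z' = χ w (y0 + z') := by
        intro z'
        rw [χsymm w (y0 + z'), hχ_add, χsymm y0 w, χsymm z' w]
      have key : χ w y0 * ∑ z' : A, χ w z' = ∑ z' : A, χ w z' := by
        rw [Finset.mul_sum]
        simp_rw [hrw]
        exact Fintype.sum_equiv (Equiv.addLeft y0) _ _ (fun z' => rfl)
      have hz : (χ w y0 - 1) * ∑ z' : A, χ w z' = 0 := by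
        rw [sub_mul, one_mul, key, sub_self]
      rcases mul_eq_zero.mp hz with h | h
      · exact absurd (by linear_combination h) hy0
      · simp [h, hδ, hw]
  intro x u y v z
  -- collapse x'
  have step1 : (∑ x' : A, ∑ v' : A, ∑ z' : A,
        T x x' * (starRingEnd ℂ) (S v v') * S z z' * D x' y u v' z')
      = ∑ v' : A, ∑ z' : A,
        T x (-x) * (starRingEnd ℂ) (S v v') * S z z' * D (-x) y u v' z' := by
    apply Fintype.sum_eq_single
    intro b hb
    apply Finset.sum_eq_zero; intro v' _
    apply Finset.sum_eq_zero; intro z' _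
    have hxb : x + b ≠ 0 := by
      intro h; exact hb (by linear_combination (norm := abel) h)
    have : T x b = 0 := by rw [hT, hδ]; simp [hxb]
    rw [this]; ring
  -- collapse v'
  have step2 : (∑ v' : A, ∑ z' : A,
        T x (-x) * (starRingEnd ℂ) (S v v') * S z z' * D (-x) y u v' z')
      = ∑ z' : A,
        T x (-x) * (starRingEnd ℂ) (S v (u + z')) * S z z' * D (-x) y u (u + z') z' := by
    rw [Finset.sum_comm]
    apply Finset.sum_congr rfl
    intro z' _
    apply Fintype.sum_eq_single
    intro b hb
    have hub : u - b + z' ≠ 0 := by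
      intro h; exact hb (by linear_combination (norm := abel) -h)
    have : D (-x) y u b z' = 0 := by
      rw [hD]; simp [hδ, hub]
    rw [this]; ring
  rw [step1, step2]
  by_cases hu : -x - y + u = 0
  · -- u = x + y case
    have hxu : x - u + y = 0 := by linear_combination (norm := abel) -hu
    set w : A := z - (v - u) - x with hw_def
    have hterm : ∀ z' : A,
        T x (-x) * (starRingEnd ℂ) (S v (u + z')) * S z z' * D (-x) y u (u + z') z'
        = (g x * g z * (g (v - u))⁻¹) * χ w z' := by
      intro z'
      rw [hT, hS, hS, hD, hδ (x + -x), hδ (-x - y + u), hδ (u - (u + z') + z')]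
      rw [if_pos (show x + -x = 0 by abel), if_pos hu,
        if_pos (show u - (u + z') + z' = 0 by abel)]
      rw [conjg, show v - (u + z') = (v - u) - z' by abel, gsub (v - u) z', gsub z z',
        show w = z + (-(v - u)) + (-x) by rw [hw_def]; abel,
        hχ_add, hχ_add, χ_neg, χ_neg]
      have h1 := gne x
      have h2 := gne z
      have h3 := gne (v - u)
      have h4 := gne z'
      have h5 := χne (v - u) z'
      have h6 := χne x z'
      have h7 := χne z z'
      field_simp
    rw [Finset.sum_congr rfl (fun z' _ => hterm z'), ← Finset.mul_sum, orth]
    rw [hD, hδ (x - u + y), if_pos hxu]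
    have hconjχ : (starRingEnd ℂ) (χ x z) = (χ x z)⁻¹ := by
      rw [hχ, map_mul, map_mul, map_inv₀, conjg, conjg, conjg, inv_inv]
      rw [gadd x z]
      have := gne x; have := gne z; have := χne x z
      field_simp
    have hδreal : (starRingEnd ℂ) (δ (y - v + z)) = δ (y - v + z) := by
      rw [hδ]; split <;> simp
    rw [map_mul, map_mul, hconjχ, map_one, hδreal]
    have hwv : w = y - v + z := by
      rw [hw_def]
      have huxy : u = x + y := by linear_combination (norm := abel) hu
      rw [huxy]; abel
    have hcard : (Fintype.card A : ℂ) ≠ 0 :=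
      Nat.cast_ne_zero.mpr Fintype.card_ne_zero
    by_cases hw : w = 0
    · have hvu : v - u = z - x := by
        have h0 : z - (v - u) - x = 0 := by rw [← hw_def]; exact hw
        linear_combination (norm := abel) -h0
      rw [hvu, ← hwv, hw, hδ, if_pos rfl]
      rw [gsub z x, χsymm z x]
      have h1 := gne x; have h2 := gne z; have h3 := χne x z
      field_simp
    · rw [← hwv, hδ, if_neg hw]
      ring
  · -- u ≠ x + y : both sides vanish
    have hxu : x - u + y ≠ 0 := by
      intro h; exact hu (by linear_combination (norm := abel) -h)
    have hzero : ∀ z' : A,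
        T x (-x) * (starRingEnd ℂ) (S v (u + z')) * S z z' * D (-x) y u (u + z') z' = 0 := by
      intro z'
      have : D (-x) y u (u + z') z' = 0 := by
        rw [hD, hδ (-x - y + u)]
        simp [hu]
      rw [this]; ring
    rw [Finset.sum_congr rfl (fun z' _ => hzero z'), Finset.sum_const_zero, mul_zero]
    rw [hD, hδ (x - u + y), if_neg hxu]
    simp
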